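/- Let Q_u[z] := z z_uu - (1/2) z_u² - z z_u/u - 2(n-1) z²/u². Then for Z₁(u) = b u⁻²(1-u²)^{1+λ}, one has Q_u[Z₁] = 2b² u⁻⁶ (1-u²)^{2λ} { 4 - n(1-u²)² + 2u²(λ-3) + u⁴(λ-1)² } on (0,1). -/

import Mathlib

/-- The quadratic operator `Q_u[z] = z z'' - (1/2)(z')² - z z'/u - 2(n-1) z²/u²`. -/
noncomputable def Qop (n : ℕ) (z : ℝ → ℝ) (u : ℝ) : ℝ :=
  z u * deriv (deriv z) u - (1 / 2) * (deriv z u) ^ 2 - z u * deriv z u / u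
    - 2 * ((n : ℝ) - 1) * (z u) ^ 2 / u ^ 2

/-- For `Z₁(u) = b u⁻²(1-u²)^{1+λ}` one has
`Q_u[Z₁] = 2b² u⁻⁶ (1-u²)^{2λ} (4 - n(1-u²)² + 2u²(λ-3) + u⁴(λ-1)²)` on `(0,1)`. -/
theorem Qop_Z1_formula (n : ℕ) (hn : 2 ≤ n) (lam b : ℝ) (hlam : 0 < lam) :
    ∀ u ∈ Set.Ioo (0 : ℝ) 1,
      Qop n (fun u : ℝ => b * (1 - u ^ 2) ^ (1 + lam) / u ^ 2) u
        = 2 * b ^ 2 / u ^ 6 * (1 - u ^ 2) ^ (2 * lam)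
            * (4 - n * (1 - u ^ 2) ^ 2 + 2 * u ^ 2 * (lam - 3)
                + u ^ 4 * (lam - 1) ^ 2) := by
  intro u hu
  obtain ⟨hu0, hu1⟩ := hu
  set z : ℝ → ℝ := fun y => b * (1 - y ^ 2) ^ (1 + lam) / y ^ 2 with hzdef
  set z₁ : ℝ → ℝ := fun x =>
    (b * ((1 + lam) * (1 - x ^ 2) ^ lam * (-(2 * x))) * x ^ 2
      - b * (1 - x ^ 2) ^ (1 + lam) * (2 * x)) / (x ^ 2) ^ 2 with hz1def
  have hZ : ∀ x ∈ Set.Ioo (0 : ℝ) 1, HasDerivAt z (z₁ x) x := by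
    intro x hx
    have hx0 : x ≠ 0 := ne_of_gt hx.1
    have hvx : (0 : ℝ) < 1 - x ^ 2 := by nlinarith [hx.1, hx.2]
    have h1 : HasDerivAt (fun y : ℝ => 1 - y ^ 2) (-(2 * x)) x := by
      simpa using ((hasDerivAt_pow 2 x).const_sub 1)
    have h2 : HasDerivAt (fun y : ℝ => (1 - y ^ 2) ^ (1 + lam))
        ((1 + lam) * (1 - x ^ 2) ^ lam * (-(2 * x))) x := by
      have h := h1.rpow_const (p := 1 + lam) (Or.inl hvx.ne')
      rw [add_sub_cancel_left] at h
      convert h using 1; ring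
    have h3 := h2.const_mul b
    have h4 : HasDerivAt (fun y : ℝ => y ^ 2) (2 * x) x := by
      simpa using hasDerivAt_pow 2 x
    have := h3.div h4 (pow_ne_zero 2 hx0)
    exact this
  have hvu : (0 : ℝ) < 1 - u ^ 2 := by nlinarith
  have hu0' : u ≠ 0 := ne_of_gt hu0
  have h1 : HasDerivAt (fun y : ℝ => 1 - y ^ 2) (-(2 * u)) u := by
    simpa using ((hasDerivAt_pow 2 u).const_sub 1)
  -- deriv z = z₁ near u
  have hdz : deriv z u = z₁ u := (hZ u ⟨hu0, hu1⟩).deriv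
  have hdzev : deriv z =ᶠ[nhds u] z₁ :=
    Filter.eventuallyEq_of_mem (isOpen_Ioo.mem_nhds ⟨hu0, hu1⟩)
      (fun x hx => (hZ x hx).deriv)
  -- second derivative: differentiate z₁ at u
  have hg : HasDerivAt (fun x : ℝ => (1 - x ^ 2) ^ lam)
      (lam * (1 - u ^ 2) ^ (lam - 1) * (-(2 * u))) u := by
    have h := h1.rpow_const (p := lam) (Or.inl hvu.ne')
    convert h using 1; ring
  have h2u : HasDerivAt (fun y : ℝ => (1 - y ^ 2) ^ (1 + lam))
      ((1 + lam) * (1 - u ^ 2) ^ lam * (-(2 * u))) u := by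
    have h := h1.rpow_const (p := 1 + lam) (Or.inl hvu.ne')
    rw [add_sub_cancel_left] at h
    convert h using 1; ring
  have hgc := hg.const_mul (1 + lam)
  have hlin : HasDerivAt (fun x : ℝ => -(2 * x)) (-2) u := by
    exact (((hasDerivAt_id u).const_mul 2).neg).congr_deriv (by ring)
  have hlin2 : HasDerivAt (fun x : ℝ => 2 * x) 2 u := by
    simpa using (hasDerivAt_id u).const_mul 2
  have hp := (hgc.mul hlin).const_mul b
  have hT1 := hp.mul (hasDerivAt_pow 2 u)
  have hT2 := (h2u.const_mul b).mul hlin2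
  have hN := hT1.sub hT2
  have hD := (hasDerivAt_pow 2 u).pow 2
  have hz1' := hN.div hD (by positivity : ((u ^ 2) ^ 2 : ℝ) ≠ 0)
  have hddz : deriv (deriv z) u = deriv z₁ u := hdzev.deriv_eq
  have hdz1 : deriv z₁ u = _ := hz1'.deriv
  -- algebra
  set A : ℝ := (1 - u ^ 2) ^ (lam - 1) with hAdef
  have e1 : (1 - u ^ 2) ^ lam = A * (1 - u ^ 2) := by
    rw [hAdef, ← Real.rpow_add_one hvu.ne', sub_add_cancel]
  have e2 : (1 - u ^ 2) ^ (1 + lam) = A * (1 - u ^ 2) ^ 2 := by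
    rw [hAdef, pow_two ((1:ℝ) - u ^ 2), ← mul_assoc, ← Real.rpow_add_one hvu.ne',
      sub_add_cancel, ← Real.rpow_add_one hvu.ne', add_comm]
  have e3 : (1 - u ^ 2) ^ (2 * lam) = A ^ 2 * (1 - u ^ 2) ^ 2 := by
    rw [hAdef, ← Real.rpow_natCast ((1 - u ^ 2) ^ (lam - 1)) 2, ← Real.rpow_mul hvu.le,
      pow_two ((1:ℝ) - u ^ 2), ← mul_assoc, ← Real.rpow_add_one hvu.ne',
      ← Real.rpow_add_one hvu.ne']
    congr 1
    push_cast
    ring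
  simp only [Qop, hddz, hdz1, hdz]
  simp only [hz1def, hzdef, Pi.mul_apply, Pi.sub_apply, Pi.pow_apply, Pi.div_apply, e1, e2, e3]
  field_simp
  ring
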